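/- Let F : ℝ⁶ → ℝ⁶ be the reaction vector field of the reduced coagulation model. A point u* = (T*, U₅*, U₈*, U₉*, U₁₀*, U₁₁*) satisfies F(u*) = 0 if and only if U₅* = φ₅(T*), U₈* = φ₈(T*), U₉* = φ₉(T*), U₁₀* = φ₁₀(T*), U₁₁* = φ₁₁(T*), and P(T*) = 0. In particular, stationary points of the kinetic system du/dt = F(u) are in one-to-one correspondence with the roots T* of the quartic polynomial P. -/

import Mathlib

open Set

/-- Stationary points of the reduced coagulation model.
`F u = 0` iff the components satisfy `Uᵢ = φᵢ(T)` and `P(T) = 0`; in particular the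
projection `u ↦ T = u 0` is a bijection between stationary points of the kinetic
system and the roots of the quartic polynomial `P`. -/
theorem stmt_0
    (k2 kb2 k5 k8 k9 k10 kb10 k11 k89 k510
     h2 h5 h8 h9 h10 h11 h89 h510 T0 : ℝ)
    (hpos : 0 < k2 ∧ 0 < kb2 ∧ 0 < k5 ∧ 0 < k8 ∧ 0 < k9 ∧ 0 < k10 ∧ 0 < kb10 ∧
            0 < k11 ∧ 0 < k89 ∧ 0 < k510 ∧ 0 < h2 ∧ 0 < h5 ∧ 0 < h8 ∧ 0 < h9 ∧
            0 < h10 ∧ 0 < h11 ∧ 0 < h89 ∧ 0 < h510 ∧ 0 < T0)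
    (F : (Fin 6 → ℝ) → (Fin 6 → ℝ))
    (hF : ∀ u : Fin 6 → ℝ,
      F u = ![(k2 * u 4 + kb2 * (k510 / h510) * u 4 * u 1) * (1 - u 0 / T0) - h2 * u 0,
              k5 * u 0 - h5 * u 1,
              k8 * u 0 - h8 * u 2,
              k9 * u 5 - h9 * u 3,
              k10 * u 3 + kb10 * (k89 / h89) * u 3 * u 2 - h10 * u 4,
              k11 * u 0 - h11 * u 5])
    (φ5 φ8 φ9 φ10 φ11 P : ℝ → ℝ)
    (hφ5 : ∀ T, φ5 T = (k5 / h5) * T)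
    (hφ8 : ∀ T, φ8 T = (k8 / h8) * T)
    (hφ11 : ∀ T, φ11 T = (k11 / h11) * T)
    (hφ9 : ∀ T, φ9 T = (k9 * k11 / (h9 * h11)) * T)
    (hφ10 : ∀ T, φ10 T = (k9 * k11 / (h10 * h9 * h11)) *
        (k10 * T + kb10 * (k89 * k8 / (h89 * h8)) * T ^ 2))
    (hP : ∀ T, P T = h2 * T - (k2 + kb2 * (k510 / h510) * φ5 T) * φ10 T * (1 - T / T0)) :
    (∀ u : Fin 6 → ℝ,
      F u = 0 ↔
        (u 1 = φ5 (u 0) ∧ u 2 = φ8 (u 0) ∧ u 3 = φ9 (u 0) ∧ u 4 = φ10 (u 0) ∧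
         u 5 = φ11 (u 0) ∧ P (u 0) = 0)) ∧
    Set.BijOn (fun u : Fin 6 → ℝ => u 0) {u | F u = 0} {T | P T = 0} := by
  obtain ⟨hk2, hkb2, hk5, hk8, hk9, hk10, hkb10, hk11, hk89, hk510,
    hh2, hh5, hh8, hh9, hh10, hh11, hh89, hh510, hT0⟩ := hpos
  have key : ∀ u : Fin 6 → ℝ,
      F u = 0 ↔
        (u 1 = φ5 (u 0) ∧ u 2 = φ8 (u 0) ∧ u 3 = φ9 (u 0) ∧ u 4 = φ10 (u 0) ∧
         u 5 = φ11 (u 0) ∧ P (u 0) = 0) := by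
    intro u
    rw [hF]
    constructor
    · intro h
      have h0 : (k2 * u 4 + kb2 * (k510 / h510) * u 4 * u 1) * (1 - u 0 / T0) - h2 * u 0 = 0 :=
        congrFun h 0
      have h1 : k5 * u 0 - h5 * u 1 = 0 := congrFun h 1
      have h2' : k8 * u 0 - h8 * u 2 = 0 := congrFun h 2
      have h3 : k9 * u 5 - h9 * u 3 = 0 := congrFun h 3
      have h4 : k10 * u 3 + kb10 * (k89 / h89) * u 3 * u 2 - h10 * u 4 = 0 := congrFun h 4
      have h5' : k11 * u 0 - h11 * u 5 = 0 := congrFun h 5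
      have e1 : u 1 = φ5 (u 0) := by rw [hφ5]; field_simp; linarith
      have e2 : u 2 = φ8 (u 0) := by rw [hφ8]; field_simp; linarith
      have e5 : u 5 = φ11 (u 0) := by rw [hφ11]; field_simp; linarith
      have hu3 : u 3 = k9 * u 5 / h9 := by field_simp; linarith
      have e3 : u 3 = φ9 (u 0) := by
        rw [hφ9, hu3, e5, hφ11]; field_simp
      have hu4 : u 4 = (k10 * u 3 + kb10 * (k89 / h89) * u 3 * u 2) / h10 := by
        field_simp at h4 ⊢
        linarith
      have e4 : u 4 = φ10 (u 0) := by
        rw [hφ10, hu4, e3, hφ9, e2, hφ8]; field_simp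
      refine ⟨e1, e2, e3, e4, e5, ?_⟩
      rw [hP, ← e1, ← e4]
      linear_combination -h0
    · rintro ⟨e1, e2, e3, e4, e5, e6⟩
      rw [hP, ← e1, ← e4] at e6
      have c0 : (k2 * u 4 + kb2 * (k510 / h510) * u 4 * u 1) * (1 - u 0 / T0) - h2 * u 0 = 0 := by
        linear_combination -e6
      have c1 : k5 * u 0 - h5 * u 1 = 0 := by rw [e1, hφ5]; field_simp; ring
      have c2 : k8 * u 0 - h8 * u 2 = 0 := by rw [e2, hφ8]; field_simp; ring
      have c3 : k9 * u 5 - h9 * u 3 = 0 := by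
        rw [e3, e5, hφ9, hφ11]; field_simp; ring
      have c4 : k10 * u 3 + kb10 * (k89 / h89) * u 3 * u 2 - h10 * u 4 = 0 := by
        rw [e2, e3, e4, hφ8, hφ9, hφ10]; field_simp; ring
      have c5 : k11 * u 0 - h11 * u 5 = 0 := by rw [e5, hφ11]; field_simp; ring
      rw [c0, c1, c2, c3, c4, c5]
      funext i
      fin_cases i <;> rfl
  refine ⟨key, ?_, ?_, ?_⟩
  · intro u hu
    exact ((key u).mp hu).2.2.2.2.2
  · intro u hu v hv huv
    have hu' := (key u).mp hu
    have hv' := (key v).mp hv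
    simp only at huv
    funext i
    fin_cases i
    · exact huv
    · exact show u 1 = v 1 by rw [hu'.1, hv'.1, huv]
    · exact show u 2 = v 2 by rw [hu'.2.1, hv'.2.1, huv]
    · exact show u 3 = v 3 by rw [hu'.2.2.1, hv'.2.2.1, huv]
    · exact show u 4 = v 4 by rw [hu'.2.2.2.1, hv'.2.2.2.1, huv]
    · exact show u 5 = v 5 by rw [hu'.2.2.2.2.1, hv'.2.2.2.2.1, huv]
  · intro T hT
    refine ⟨![T, φ5 T, φ8 T, φ9 T, φ10 T, φ11 T], ?_, rfl⟩
    rw [Set.mem_setOf_eq, key]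
    exact ⟨rfl, rfl, rfl, rfl, rfl, hT⟩
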